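/- Let $P, Q : \mathbb{Z}_s^n \to G$ be two distinct functions each expressible as a sum of functions depending on at most $d$ coordinates (i.e. $d$-junta-sums), where $G$ is an Abelian group. Then $\Pr_{\mathbf{a} \sim \mathbb{Z}_s^n}[P(\mathbf{a}) \ne Q(\mathbf{a})] \ge 1/s^d$, where $\mathbf{a}$ is uniformly random. -/

import Mathlib

open Finset

/-- `f` depends only on the coordinates in `I`. -/
def DependsOnlyOn {n : ℕ} {A G : Type*} (f : (Fin n → A) → G) (I : Finset (Fin n)) : Prop :=
  ∀ x y : Fin n → A, (∀ i ∈ I, x i = y i) → f x = f y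

/-- `f` is a sum of functions each depending on at most `d` coordinates
(a `d`-junta-sum). -/
def IsJuntaSum {n : ℕ} {A G : Type*} [AddCommMonoid G] (d : ℕ)
    (f : (Fin n → A) → G) : Prop :=
  ∃ (k : ℕ) (g : Fin k → (Fin n → A) → G) (I : Fin k → Finset (Fin n)),
    (∀ j, (I j).card ≤ d ∧ DependsOnlyOn (g j) (I j)) ∧ ∀ x, f x = ∑ j, g j x

noncomputable def jsupp {α G : Type*} [Fintype α] [Zero G] (F : α → G) : Finset α :=
  @Finset.filter _ (fun x => F x ≠ 0) (Classical.decPred _) Finset.univ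

lemma mem_jsupp {α G : Type*} [Fintype α] [Zero G] {F : α → G} {x : α} :
    x ∈ jsupp F ↔ F x ≠ 0 := by
  simp [jsupp]

lemma isJuntaSum_zero_apply {n : ℕ} {A G : Type*} [AddCommMonoid G]
    {F : (Fin n → A) → G} (h : IsJuntaSum 0 F) (x y : Fin n → A) : F x = F y := by
  obtain ⟨k, g, I, h1, h2⟩ := h
  rw [h2, h2]
  refine Finset.sum_congr rfl fun j _ => ?_
  refine (h1 j).2 x y fun i hi => absurd hi ?_
  have : I j = ∅ := Finset.card_eq_zero.mp (Nat.le_zero.mp (h1 j).1)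
  simp [this]

lemma key {s : ℕ} [NeZero s] {G : Type*} [AddCommGroup G] :
    ∀ n d : ℕ, d ≤ n → ∀ F : (Fin n → ZMod s) → G, IsJuntaSum d F → F ≠ 0 →
      s ^ (n - d) ≤ (jsupp F).card := by
  classical
  have hconst : ∀ n : ℕ, ∀ F : (Fin n → ZMod s) → G, IsJuntaSum 0 F → F ≠ 0 →
      s ^ n ≤ (jsupp F).card := by
    intro n F hJ hF
    have hx0 : ∃ x, F x ≠ 0 := by
      by_contra h
      push_neg at h
      exact hF (funext fun x => h x)
    obtain ⟨x0, hx0⟩ := hx0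
    have : jsupp F = Finset.univ := by
      ext x
      simp only [mem_jsupp, Finset.mem_univ, iff_true]
      rw [isJuntaSum_zero_apply hJ x x0]
      exact hx0
    rw [this, Finset.card_univ]
    simp [ZMod.card]
  intro n
  induction n with
  | zero =>
    intro d hd F hJ hF
    interval_cases d
    simpa using hconst 0 F hJ hF
  | succ n ih =>
    intro d hd F hJ hF
    rcases d with _ | e
    · simpa using hconst (n+1) F hJ hF
    obtain ⟨k, g, I, h1, h2⟩ := hJ
    by_cases hdep : ∀ (c c' : ZMod s) (x : Fin n → ZMod s),
        F (Fin.snoc x c) = F (Fin.snoc x c')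
    · -- F does not depend on last coordinate
      set F0 : (Fin n → ZMod s) → G := fun x => F (Fin.snoc x 0) with hF0
      have hFval : ∀ y : Fin (n+1) → ZMod s, F y = F0 (Fin.init y) := by
        intro y
        conv_lhs => rw [← Fin.snoc_init_self y]
        exact hdep (y (Fin.last n)) 0 (Fin.init y)
      have hF0ne : F0 ≠ 0 := by
        intro h
        refine hF (funext fun y => ?_)
        rw [hFval y, h]
        rfl
      have hJ0 : IsJuntaSum (min (e+1) n) F0 := by
        have Idef : Fin k → Finset (Fin n) :=
          fun j => Finset.univ.filter (fun i : Fin n => i.castSucc ∈ I j)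
        refine ⟨k, fun j x => g j (Fin.snoc x 0),
          fun j => Finset.univ.filter (fun i : Fin n => i.castSucc ∈ I j), fun j => ?_, ?_⟩
        · constructor
          · refine le_min ?_ ?_
            · refine le_trans ?_ (h1 j).1
              refine Finset.card_le_card_of_injOn Fin.castSucc ?_ ?_
              · intro i hi; simpa using (Finset.mem_filter.mp hi).2
              · intro a _ b _ hab; exact Fin.castSucc_injective n hab
            · have := Finset.card_filter_le (Finset.univ : Finset (Fin n))
                (fun i : Fin n => i.castSucc ∈ I j)
              simpa using this
          · intro x y hxy
            refine (h1 j).2 _ _ fun i hi => ?_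
            rcases Fin.eq_castSucc_or_eq_last i with ⟨i', rfl⟩ | rfl
            · simp only [Fin.snoc_castSucc]
              exact hxy i' (by simp [hi])
            · simp
        · intro x; exact h2 _
      have hd' : min (e+1) n ≤ n := min_le_right _ _
      have hkey := ih (min (e+1) n) hd' F0 hJ0 hF0ne
      -- card (jsupp F) = card (jsupp F0) * s
      have hcard : (jsupp F).card = (jsupp F0).card * s := by
        have : (jsupp F).card = ((jsupp F0) ×ˢ (Finset.univ : Finset (ZMod s))).card := by
          refine Finset.card_bij (fun y _ => (Fin.init y, y (Fin.last n))) ?_ ?_ ?_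
          · intro y hy
            simp only [Finset.mem_product, mem_jsupp, Finset.mem_univ, and_true]
            rw [← hFval y]
            exact mem_jsupp.mp hy
          · intro y1 h1' y2 h2' h
            have h3 := congrArg Prod.fst h
            have h4 := congrArg Prod.snd h
            simp only at h3 h4
            rw [← Fin.snoc_init_self y1, ← Fin.snoc_init_self y2, h3, h4]
          · intro ⟨x, c⟩ hxc
            refine ⟨Fin.snoc x c, ?_, ?_⟩
            · have hx := mem_jsupp.mp (Finset.mem_product.mp hxc).1
              rw [mem_jsupp, hFval]
              simpa using hx
            · simp
        rw [this, Finset.card_product, Finset.card_univ]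
        simp [ZMod.card]
      rw [hcard]
      calc s ^ (n + 1 - (e+1)) ≤ s ^ (n - min (e+1) n + 1) := by
            refine Nat.pow_le_pow_right (Nat.one_le_iff_ne_zero.mpr (NeZero.ne s)) ?_
            omega
        _ ≤ (jsupp F0).card * s := by
            rw [pow_succ]
            exact Nat.mul_le_mul_right s hkey
    · -- F depends on the last coordinate
      push_neg at hdep
      obtain ⟨c, c', x0, hx0⟩ := hdep
      set D : (Fin n → ZMod s) → G := fun x => F (Fin.snoc x c) - F (Fin.snoc x c') with hD
      have hDne : D ≠ 0 := by
        intro h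
        apply hx0
        have := congrFun h x0
        simpa [hD, sub_eq_zero] using this
      have hJD : IsJuntaSum e D := by
        refine ⟨k, fun j x => g j (Fin.snoc x c) - g j (Fin.snoc x c'),
          fun j => if Fin.last n ∈ I j then Finset.univ.filter (fun i : Fin n => i.castSucc ∈ I j) else ∅,
          fun j => ?_, ?_⟩
        · by_cases hlast : Fin.last n ∈ I j
          · simp only [hlast, if_pos]
            constructor
            · have : (Finset.univ.filter (fun i : Fin n => i.castSucc ∈ I j)).card
                  ≤ ((I j).erase (Fin.last n)).card := by
                refine Finset.card_le_card_of_injOn Fin.castSucc ?_ ?_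
                · intro i hi
                  refine Finset.mem_erase.mpr ⟨?_, (Finset.mem_filter.mp hi).2⟩
                  exact (Fin.castSucc_lt_last i).ne
                · intro a _ b _ hab; exact Fin.castSucc_injective n hab
              refine le_trans this ?_
              rw [Finset.card_erase_of_mem hlast]
              have := (h1 j).1
              omega
            · intro x y hxy
              have hagree : ∀ (b : ZMod s), g j (Fin.snoc x b) = g j (Fin.snoc y b) := by
                intro b
                refine (h1 j).2 _ _ fun i hi => ?_
                rcases Fin.eq_castSucc_or_eq_last i with ⟨i', rfl⟩ | rfl
                · simp only [Fin.snoc_castSucc]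
                  exact hxy i' (by simp [hlast, hi])
                · simp
              show g j (Fin.snoc x c) - g j (Fin.snoc x c')
                  = g j (Fin.snoc y c) - g j (Fin.snoc y c')
              rw [hagree c, hagree c']
          · simp only [hlast, if_neg, Finset.card_empty]
            refine ⟨Nat.zero_le _, ?_⟩
            have hz : ∀ x : Fin n → ZMod s, g j (Fin.snoc x c) = g j (Fin.snoc x c') := by
              intro x
              refine (h1 j).2 _ _ fun i hi => ?_
              rcases Fin.eq_castSucc_or_eq_last i with ⟨i', rfl⟩ | rfl
              · simp
              · exact absurd hi hlast
            intro x y _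
            show g j (Fin.snoc x c) - g j (Fin.snoc x c')
                = g j (Fin.snoc y c) - g j (Fin.snoc y c')
            rw [hz x, hz y]
            simp [sub_self]
        · intro x
          simp only [hD, h2, Finset.sum_sub_distrib]
      have he : e ≤ n := by omega
      have hkey := ih e he D hJD hDne
      -- injection from jsupp D into jsupp F
      have hinj : (jsupp D).card ≤ (jsupp F).card := by
        classical
        have hfix : ∀ z : Fin n → ZMod s,
            Fin.init ((if F (Fin.snoc z c) ≠ 0 then Fin.snoc z c else Fin.snoc z c') :
              Fin (n+1) → ZMod s) = z := by
          intro z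
          by_cases h : F (Fin.snoc z c) ≠ 0
          · rw [if_pos h]; exact Fin.init_snoc ..
          · rw [if_neg h]; exact Fin.init_snoc ..
        refine Finset.card_le_card_of_injOn
          (fun x => if F (Fin.snoc x c) ≠ 0 then Fin.snoc x c else Fin.snoc x c') ?_ ?_
        · intro x hx
          rw [Finset.mem_coe, mem_jsupp]
          show F (if F (Fin.snoc x c) ≠ 0 then Fin.snoc x c else Fin.snoc x c') ≠ 0
          by_cases h : F (Fin.snoc x c) ≠ 0
          · rw [if_pos h]; exact h
          · rw [if_neg h]
            push_neg at h
            intro hc'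
            have hm := mem_jsupp.mp hx
            apply hm
            show F (Fin.snoc x c) - F (Fin.snoc x c') = 0
            rw [h, hc', sub_zero]
        · intro a _ b _ hab
          simp only at hab
          have := congrArg Fin.init hab
          rwa [hfix a, hfix b] at this
      refine le_trans ?_ hinj
      have : n + 1 - (e + 1) = n - e := by omega
      rw [this]
      exact hkey

lemma isJuntaSum_sub {s n d : ℕ} {G : Type*} [AddCommGroup G]
    {P Q : (Fin n → ZMod s) → G} (hP : IsJuntaSum d P) (hQ : IsJuntaSum d Q) :
    IsJuntaSum d (fun x => P x - Q x) := by
  obtain ⟨k1, g1, I1, hg1, hs1⟩ := hP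
  obtain ⟨k2, g2, I2, hg2, hs2⟩ := hQ
  refine ⟨k1 + k2, Fin.append g1 (fun j x => -(g2 j x)), Fin.append I1 I2, ?_, ?_⟩
  · intro j
    refine Fin.addCases (fun j1 => ?_) (fun j2 => ?_) j
    · simpa using hg1 j1
    · simp only [Fin.append_right]
      exact ⟨(hg2 j2).1, fun x y h => by
        show -g2 j2 x = -g2 j2 y
        rw [(hg2 j2).2 x y h]⟩
  · intro x
    rw [Fin.sum_univ_add]
    simp only [Fin.append_left, Fin.append_right]
    rw [hs1, hs2, Finset.sum_neg_distrib, sub_eq_add_neg]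

/-- Distance lemma for junta-sums: two distinct `d`-junta-sums
`P, Q : ℤ_s^n → G` differ on at least a `1/s^d` fraction of points. -/
theorem stmt2 {s n d : ℕ} [NeZero s] (hd : d ≤ n) {G : Type*} [AddCommGroup G]
    (P Q : (Fin n → ZMod s) → G)
    (hP : IsJuntaSum d P) (hQ : IsJuntaSum d Q) (hne : P ≠ Q) :
    (1 : ℝ) / (s : ℝ) ^ d ≤ ({a : Fin n → ZMod s | P a ≠ Q a}.ncard : ℝ) / (s : ℝ) ^ n := by
  set F : (Fin n → ZMod s) → G := fun x => P x - Q x with hF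
  have hFne : F ≠ 0 := by
    intro h
    refine hne (funext fun x => ?_)
    have := congrFun h x
    simpa [hF, sub_eq_zero] using this
  have hJ : IsJuntaSum d F := isJuntaSum_sub hP hQ
  have hk := key n d hd F hJ hFne
  have hset : {a : Fin n → ZMod s | P a ≠ Q a} = ↑(jsupp F) := by
    ext a
    simp [mem_jsupp, hF, sub_ne_zero]
  rw [hset, Set.ncard_coe_finset]
  have hs : (0:ℝ) < (s:ℝ) := by
    exact_mod_cast Nat.pos_of_ne_zero (NeZero.ne s)
  rw [div_le_div_iff₀ (by positivity) (by positivity)]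
  have : (s:ℝ) ^ n = (s:ℝ) ^ (n - d) * (s:ℝ) ^ d := by
    rw [← pow_add]
    congr 1
    omega
  rw [one_mul, this]
  have : ((s:ℝ) ^ (n - d)) ≤ ((jsupp F).card : ℝ) := by
    exact_mod_cast hk
  nlinarith [pow_pos hs d, pow_pos hs (n-d)]
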